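/- Let p ∈ (1,∞) and α < 1 - 1/p. Set φ(s) = |(1+s)^α - 1| for s > 0, and define the kernel k(t,s) = 1_{(0,t)}(s) · (1/(t-s)) · φ((t-s)/s) on (0,∞)². Then for every t > 0, ‖k(t,·)‖_{L^{p'}(0,∞)}^{p'} = t^{1-p'} ∫_0^1 |(σ^{-α} - 1)/(σ - 1)|^{p'} dσ, and the integral c̃ := ∫_0^1 |(σ^{-α}-1)/(σ-1)|^{p'} dσ is finite. -/

import Mathlib

open MeasureTheory Set Real

/-- Let `p ∈ (1,∞)`, `α < 1 - 1/p`, `φ(s) = |(1+s)^α - 1|`, and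
`k(t,s) = 1_{(0,t)}(s) (t-s)⁻¹ φ((t-s)/s)`. Then for all `t > 0`,
`‖k(t,·)‖_{L^{p'}}^{p'} = t^{1-p'} ∫_0^1 |(σ^{-α}-1)/(σ-1)|^{p'} dσ`,
and `c̃ = ∫_0^1 |(σ^{-α}-1)/(σ-1)|^{p'} dσ` is finite. -/
theorem stmt5 (p p' α : ℝ) (hp : 1 < p) (hpp' : 1 / p + 1 / p' = 1)
    (hα : α < 1 - 1 / p) :
    IntegrableOn (fun σ => |(σ ^ (-α) - 1) / (σ - 1)| ^ p') (Ioo (0:ℝ) 1) ∧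
    ∀ t : ℝ, 0 < t →
      ∫ s in Ioo 0 t, ((t - s)⁻¹ * |(1 + (t - s) / s) ^ α - 1|) ^ p' =
        t ^ (1 - p') * ∫ σ in Ioo (0:ℝ) 1, |(σ ^ (-α) - 1) / (σ - 1)| ^ p' := by
  have hp0 : (0:ℝ) < p := lt_trans one_pos hp
  have h1p : (0:ℝ) < 1 - 1 / p := by
    have : 1 / p < 1 := by rw [div_lt_one hp0]; exact hp
    linarith
  have hp'inv : 1 / p' = 1 - 1 / p := by linarith
  have hp'pos : (0 : ℝ) < p' := by
    by_contra h
    push_neg at h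
    have : 1 / p' ≤ 0 := div_nonpos_of_nonneg_of_nonpos zero_le_one h
    linarith
  have hp'1 : 1 < p' := by
    have hpinv : 0 < 1 / p := by positivity
    have h1 : 1 / p' < 1 := by rw [hp'inv]; linarith
    rw [div_lt_one hp'pos] at h1
    exact h1
  have hα' : α < 1 / p' := by rw [hp'inv]; exact hα
  -- measurability of the target integrand
  have hmeas : Measurable (fun σ : ℝ => |(σ ^ (-α) - 1) / (σ - 1)| ^ p') := by
    fun_prop
  -- integrability
  have hInt : IntegrableOn (fun σ => |(σ ^ (-α) - 1) / (σ - 1)| ^ p') (Ioo (0:ℝ) 1) := by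
    set a : ℝ := max α 0 with ha
    have ha0 : 0 ≤ a := le_max_right _ _
    have hap' : a * p' < 1 := by
      have h2 : a < 1 / p' := by
        rcases le_or_gt α 0 with h | h
        · have : a = 0 := max_eq_right h
          rw [this, hp'inv]; exact h1p
        · have : a = α := max_eq_left h.le
          rw [this]; exact hα'
      calc a * p' < (1 / p') * p' := by
            exact mul_lt_mul_of_pos_right h2 hp'pos
        _ = 1 := by field_simp
    have hA : IntegrableOn (fun σ => |(σ ^ (-α) - 1) / (σ - 1)| ^ p') (Ioo (0:ℝ) (1/2)) := by
      have hdom : IntegrableOn (fun σ : ℝ => 4 ^ p' * σ ^ (-(a * p'))) (Ioo (0:ℝ) (1/2)) := by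
        have h0 : IntegrableOn (fun σ : ℝ => σ ^ (-(a * p'))) (Ioo (0:ℝ) (1/2)) := by
          rw [intervalIntegral.integrableOn_Ioo_rpow_iff (by norm_num : (0:ℝ) < 1/2)]
          linarith
        exact h0.const_mul _
      apply Integrable.mono' hdom (hmeas.aestronglyMeasurable.restrict)
      filter_upwards [ae_restrict_mem measurableSet_Ioo] with σ hσ
      obtain ⟨hσ0, hσh⟩ := hσ
      have hσ1 : σ < 1 := by linarith
      have hb1 : |σ ^ (-α) - 1| ≤ σ ^ (-α) + 1 := by
        have := abs_sub (σ ^ (-α)) (1:ℝ)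
        calc |σ ^ (-α) - 1| ≤ |σ ^ (-α)| + |(1:ℝ)| := abs_sub _ _
          _ = σ ^ (-α) + 1 := by
              rw [abs_of_nonneg (Real.rpow_nonneg hσ0.le _), abs_one]
      have hpow : σ ^ (-α) ≤ σ ^ (-a) := by
        apply Real.rpow_le_rpow_of_exponent_ge hσ0 hσ1.le
        have : α ≤ a := le_max_left _ _
        linarith
      have hpow1 : (1:ℝ) ≤ σ ^ (-a) := by
        rw [show (1:ℝ) = σ ^ (0:ℝ) by rw [Real.rpow_zero]]
        apply Real.rpow_le_rpow_of_exponent_ge hσ0 hσ1.le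
        linarith
      have hden : (1:ℝ)/2 ≤ |σ - 1| := by
        rw [abs_of_neg (by linarith : σ - 1 < 0)]
        linarith
      have hbase : |(σ ^ (-α) - 1) / (σ - 1)| ≤ 4 * σ ^ (-a) := by
        rw [abs_div]
        have h1 : |σ ^ (-α) - 1| ≤ 2 * σ ^ (-a) := by linarith
        calc |σ ^ (-α) - 1| / |σ - 1| ≤ (2 * σ ^ (-a)) / (1/2) := by
              apply div_le_div₀ (by positivity) h1 (by norm_num) hden
          _ = 4 * σ ^ (-a) := by ring
      have hnn : 0 ≤ |(σ ^ (-α) - 1) / (σ - 1)| := abs_nonneg _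
      rw [Real.norm_eq_abs, abs_of_nonneg (Real.rpow_nonneg hnn _)]
      calc |(σ ^ (-α) - 1) / (σ - 1)| ^ p' ≤ (4 * σ ^ (-a)) ^ p' :=
            Real.rpow_le_rpow hnn hbase hp'pos.le
        _ = 4 ^ p' * σ ^ (-(a * p')) := by
            rw [Real.mul_rpow (by norm_num) (Real.rpow_nonneg hσ0.le _),
              ← Real.rpow_mul hσ0.le, neg_mul]
    have hB : IntegrableOn (fun σ => |(σ ^ (-α) - 1) / (σ - 1)| ^ p') (Ico (1/2:ℝ) 1) := by
      set M : ℝ := |α| * (1 + 2 ^ (α + 1)) with hM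
      have hM0 : 0 ≤ M := by
        apply mul_nonneg (abs_nonneg _)
        positivity
      apply Measure.integrableOn_of_bounded (M := M ^ p')
      · rw [Real.volume_Ico]; exact ENNReal.ofReal_ne_top
      · exact hmeas.aestronglyMeasurable
      · filter_upwards [ae_restrict_mem measurableSet_Ico] with σ hσ
        obtain ⟨hσh, hσ1⟩ := hσ
        have hσ0 : (0:ℝ) < σ := by linarith
        -- MVT
        obtain ⟨c, hc, hslope⟩ := exists_hasDerivAt_eq_slope (fun x => x ^ (-α))
          (fun x => -α * x ^ (-α - 1)) hσ1
          (by
            apply continuousOn_of_forall_continuousAt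
            intro x hx
            exact Real.continuousAt_rpow_const x (-α)
              (Or.inl (lt_of_lt_of_le hσ0 hx.1).ne'))
          (by
            intro x hx
            have hx0 : x ≠ 0 := by have := hx.1; intro h; rw [h] at this; linarith
            exact Real.hasDerivAt_rpow_const (Or.inl hx0))
        have hc0 : (1:ℝ)/2 < c := lt_of_le_of_lt hσh hc.1
        have hgval : (σ ^ (-α) - 1) / (σ - 1) = -α * c ^ (-α - 1) := by
          rw [hslope, Real.one_rpow]
          rw [div_eq_div_iff (sub_ne_zero.mpr hσ1.ne) (sub_ne_zero.mpr (by linarith : (1:ℝ) ≠ σ))]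
          ring
        have hcb : c ^ (-α - 1) ≤ 1 + 2 ^ (α + 1) := by
          rcases le_or_gt 0 (-α - 1) with h | h
          · have h1 : c ^ (-α - 1) ≤ 1 := by
              apply Real.rpow_le_one (by linarith) (by linarith [hc.2]) h
            have : (0:ℝ) ≤ 2 ^ (α + 1) := by positivity
            linarith
          · have hcpos : (0:ℝ) < c := by linarith
            have h1 : c ^ (-α - 1) = (c ^ (α + 1))⁻¹ := by
              rw [show -α - 1 = -(α + 1) by ring, Real.rpow_neg hcpos.le]
            have h2 : (1/2 : ℝ) ^ (α + 1) ≤ c ^ (α + 1) :=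
              Real.rpow_le_rpow (by norm_num) hc0.le (by linarith)
            have h3 : ((1/2 : ℝ) ^ (α + 1))⁻¹ = 2 ^ (α + 1) := by
              rw [show (1/2 : ℝ) = 2⁻¹ by norm_num, Real.inv_rpow (by norm_num), inv_inv]
            have h4 : (c ^ (α + 1))⁻¹ ≤ ((1/2 : ℝ) ^ (α + 1))⁻¹ := by
              apply inv_anti₀ (Real.rpow_pos_of_pos (by norm_num) _) h2
            have h5 : (0:ℝ) ≤ (1:ℝ) := zero_le_one
            rw [h1]
            rw [h3] at h4
            linarith
        have : |(σ ^ (-α) - 1) / (σ - 1)| ≤ M := by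
          rw [hgval, abs_mul, abs_neg]
          have hcpos : 0 ≤ c ^ (-α - 1) := Real.rpow_nonneg (by linarith) _
          rw [abs_of_nonneg hcpos]
          exact mul_le_mul_of_nonneg_left hcb (abs_nonneg _)
        rw [Real.norm_eq_abs, abs_of_nonneg (Real.rpow_nonneg (abs_nonneg _) _)]
        exact Real.rpow_le_rpow (abs_nonneg _) this hp'pos.le
    have hsub : Ioo (0:ℝ) 1 ⊆ Ioo (0:ℝ) (1/2) ∪ Ico (1/2:ℝ) 1 := by
      intro x hx
      rcases lt_or_ge x (1/2) with h | h
      · exact Or.inl ⟨hx.1, h⟩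
      · exact Or.inr ⟨h, hx.2⟩
    exact (hA.union hB).mono_set hsub
  refine ⟨hInt, ?_⟩
  intro t ht
  -- change of variables s = σ t
  have key : ∀ σ ∈ Ioo (0:ℝ) 1,
      ((t - σ * t)⁻¹ * |(1 + (t - σ * t) / (σ * t)) ^ α - 1|) ^ p'
        = t ^ (-p') * |(σ ^ (-α) - 1) / (σ - 1)| ^ p' := by
    intro σ hσ
    obtain ⟨hσ0, hσ1⟩ := hσ
    have h1 : 1 + (t - σ * t) / (σ * t) = σ⁻¹ := by
      field_simp
      ring
    have h2 : (σ⁻¹ : ℝ) ^ α = σ ^ (-α) := by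
      rw [Real.inv_rpow hσ0.le, ← Real.rpow_neg hσ0.le]
    have h3 : (t - σ * t)⁻¹ = t⁻¹ * (1 - σ)⁻¹ := by
      rw [show t - σ * t = t * (1 - σ) by ring, mul_inv]
    have h4 : (1 - σ)⁻¹ * |σ ^ (-α) - 1| = |(σ ^ (-α) - 1) / (σ - 1)| := by
      rw [abs_div, abs_of_neg (by linarith : σ - 1 < 0), div_eq_inv_mul]
      ring_nf
    rw [h1, h2, h3, mul_assoc, h4]
    rw [Real.mul_rpow (inv_nonneg.mpr ht.le) (abs_nonneg _),
      Real.inv_rpow ht.le, ← Real.rpow_neg ht.le]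
  set F : ℝ → ℝ := fun s => ((t - s)⁻¹ * |(1 + (t - s) / s) ^ α - 1|) ^ p' with hF
  have step1 : ∫ s in Ioo 0 t, F s = ∫ s in (0:ℝ)..t, F s := by
    rw [intervalIntegral.integral_of_le ht.le, integral_Ioc_eq_integral_Ioo]
  have step2 : ∫ s in (0:ℝ)..t, F s = t * ∫ σ in (0:ℝ)..1, F (σ * t) := by
    rw [intervalIntegral.integral_comp_mul_right F ht.ne', smul_eq_mul, zero_mul, one_mul,
      ← mul_assoc, mul_inv_cancel₀ ht.ne', one_mul]
  have step3 : ∫ σ in (0:ℝ)..1, F (σ * t)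
      = ∫ σ in Ioo (0:ℝ) 1, t ^ (-p') * |(σ ^ (-α) - 1) / (σ - 1)| ^ p' := by
    rw [intervalIntegral.integral_of_le zero_le_one, integral_Ioc_eq_integral_Ioo]
    exact setIntegral_congr_fun measurableSet_Ioo key
  rw [step1, step2, step3, MeasureTheory.integral_const_mul, ← mul_assoc]
  congr 1
  rw [show t * t ^ (-p') = t ^ (1:ℝ) * t ^ (-p') by rw [Real.rpow_one], ← Real.rpow_add ht]
  ring_nf
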